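/- For every integer n ≥ 3, the generalized 4-connectivity of the bubble-sort graph B_n is at most n − 2, i.e., κ₄(B_n) ≤ n − 2. -/
import Mathlib


open SimpleGraph

/-- The bubble-sort graph `B_n`: the Cayley graph on `Sym(n)` whose connection set is the set of
adjacent transpositions `[i, i+1]`, `1 ≤ i ≤ n-1`; `σ` and `τ` are adjacent iff
`τ = σ * [i, i+1]` for some `i`. -/
def bubbleSortGraph (n : ℕ) : SimpleGraph (Equiv.Perm (Fin n)) :=
  SimpleGraph.fromRel (fun σ τ => ∃ i j : Fin n, (j : ℕ) = (i : ℕ) + 1 ∧ τ = σ * Equiv.swap i j)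

/-- `T` is a family of internally disjoint trees connecting `S` in `G`: each `T i` is a tree
(as a subgraph of `G`) containing all vertices of `S`, the trees are pairwise edge disjoint, and
any two of them share exactly the vertices of `S`. -/
def InternallyDisjointTrees {V : Type*} (G : SimpleGraph V) (S : Set V) {ℓ : ℕ}
    (T : Fin ℓ → G.Subgraph) : Prop :=
  (∀ i, (T i).coe.IsTree ∧ S ⊆ (T i).verts) ∧
    Pairwise fun i j =>
      (T i).edgeSet ∩ (T j).edgeSet = ∅ ∧ (T i).verts ∩ (T j).verts = S

/-- `κ_G(S)`: the maximum number of internally disjoint trees connecting `S` in `G`. -/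
noncomputable def treeConnectivity {V : Type*} (G : SimpleGraph V) (S : Set V) : ℕ :=
  sSup {ℓ : ℕ | ∃ T : Fin ℓ → G.Subgraph, InternallyDisjointTrees G S T}

/-- The generalized `k`-connectivity `κ_k(G) = min {κ_G(S) : S ⊆ V(G), |S| = k}`. -/
noncomputable def generalizedConnectivity {V : Type*} (G : SimpleGraph V) (k : ℕ) : ℕ :=
  sInf {m : ℕ | ∃ S : Finset V, S.card = k ∧ m = treeConnectivity G ↑S}

/-- The vertex connectivity `κ(G)`: the minimum cardinality of a set `S` of vertices such that
`G - S` is disconnected or has at most one vertex. -/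
noncomputable def vertexConnectivity {V : Type*} (G : SimpleGraph V) : ℕ :=
  sInf {k : ℕ | ∃ S : Set V,
    S.ncard = k ∧ (¬ (G.induce Sᶜ).Connected ∨ Sᶜ.ncard ≤ 1)}

/-- `V_i`: the set of permutations `σ` of `[n]` with `σ(n) = i` (last entry equal to `i`). -/
def Vpart (n : ℕ) (hn : 0 < n) (i : Fin n) : Set (Equiv.Perm (Fin n)) :=
  {σ | σ ⟨n - 1, Nat.sub_lt hn Nat.one_pos⟩ = i}

lemma bsg_adj_form {n : ℕ} {u z : Equiv.Perm (Fin n)} (h : (bubbleSortGraph n).Adj u z) :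
    ∃ i j : Fin n, (j : ℕ) = (i : ℕ) + 1 ∧ z = u * Equiv.swap i j := by
  rw [bubbleSortGraph, SimpleGraph.fromRel_adj] at h
  obtain ⟨hne, h | h⟩ := h
  · exact h
  · obtain ⟨i, j, hij, hu⟩ := h
    exact ⟨i, j, hij, by rw [hu, mul_assoc, Equiv.swap_mul_self, mul_one]⟩

lemma exists_adj_of_walk {V' : Type*} {H : SimpleGraph V'} :
    ∀ {a b : V'}, H.Walk a b → a ≠ b → ∃ c, H.Adj a c := by
  intro a b p hab
  cases p with
  | nil => exact absurd rfl hab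
  | cons h q => exact ⟨_, h⟩

lemma key {n ℓ : ℕ} (hn : 3 ≤ n) {S : Set (Equiv.Perm (Fin n))}
    {T : Fin ℓ → (bubbleSortGraph n).Subgraph}
    (hT : InternallyDisjointTrees (bubbleSortGraph n) S T)
    (hℓ : n - 1 ≤ ℓ)
    {u w : Equiv.Perm (Fin n)} (hu : u ∈ S) (hw : w ∈ S) (huw : u ≠ w)
    (i0 i1 : Fin n) (h0 : (i0 : ℕ) = 0) (h1 : (i1 : ℕ) = 1) :
    ∃ t0 : Fin ℓ,
      s(u, u * Equiv.swap i0 i1) ∈ (T t0).edgeSet ∧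
      ∀ z, (T t0).Adj u z → z = u * Equiv.swap i0 i1 := by
  classical
  have hdisj : ∀ {t t' : Fin ℓ} {e : Sym2 (Equiv.Perm (Fin n))},
      e ∈ (T t).edgeSet → e ∈ (T t').edgeSet → t = t' := by
    intro t t' e h1 h2
    by_contra hne
    have hmem : e ∈ (T t).edgeSet ∩ (T t').edgeSet := ⟨h1, h2⟩
    rw [(hT.2 hne).1] at hmem
    exact hmem
  -- each tree has an edge at u
  have hstep : ∀ t : Fin ℓ, ∃ i : Fin n, ∃ hlt : (i : ℕ) + 1 < n,
      s(u, u * Equiv.swap i ⟨(i : ℕ) + 1, hlt⟩) ∈ (T t).edgeSet := by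
    intro t
    obtain ⟨htree, hsub⟩ := hT.1 t
    have hu' : u ∈ (T t).verts := hsub hu
    have hw' : w ∈ (T t).verts := hsub hw
    have hr := htree.isConnected.preconnected ⟨u, hu'⟩ ⟨w, hw'⟩
    obtain ⟨p⟩ := hr
    obtain ⟨c, hc⟩ := exists_adj_of_walk p (by simpa [Subtype.ext_iff] using huw)
    have hadj : (T t).Adj u (c : Equiv.Perm (Fin n)) := hc
    obtain ⟨i, j, hij, hz⟩ := bsg_adj_form ((T t).adj_sub hadj)
    have hlt : (i : ℕ) + 1 < n := hij ▸ j.isLt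
    refine ⟨i, hlt, ?_⟩
    have hj : j = ⟨(i : ℕ) + 1, hlt⟩ := Fin.ext (by simp [hij])
    rw [← hj, ← hz]
    exact Subgraph.mem_edgeSet.mpr hadj
  choose F hFlt hFedge using hstep
  -- F is injective
  have hFinj : Function.Injective F := by
    intro t t' h
    have hmk : (⟨(F t : ℕ) + 1, hFlt t⟩ : Fin n) = ⟨(F t' : ℕ) + 1, hFlt t'⟩ :=
      Fin.ext (by simp [h])
    have hswap := congrArg₂ Equiv.swap h hmk
    have h2 := hFedge t
    rw [hswap] at h2
    exact hdisj h2 (hFedge t')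

  -- map into Fin (n-1)
  set F' : Fin ℓ → Fin (n - 1) := fun t => ⟨(F t : ℕ), by have := hFlt t; omega⟩ with hF'def
  have hF'inj : Function.Injective F' := by
    intro t t' h
    apply hFinj
    apply Fin.ext
    have := congrArg Fin.val h
    simpa [hF'def] using this
  have hle : ℓ ≤ n - 1 := by
    simpa using Fintype.card_le_of_injective F' hF'inj
  have hcard : ℓ = n - 1 := le_antisymm hle hℓ
  have hF'bij : Function.Bijective F' :=
    (Fintype.bijective_iff_injective_and_card F').mpr ⟨hF'inj, by simp [hcard]⟩
  obtain ⟨t0, ht0⟩ := hF'bij.2 ⟨0, by omega⟩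
  have hFt0 : F t0 = i0 := Fin.ext (by
    have := congrArg Fin.val ht0
    simp [hF'def] at this
    omega)
  have hedge : s(u, u * Equiv.swap i0 i1) ∈ (T t0).edgeSet := by
    have h' := hFedge t0
    have hi1 : (⟨(F t0 : ℕ) + 1, hFlt t0⟩ : Fin n) = i1 := Fin.ext (by simp [hFt0, h0, h1])
    have hswap := congrArg₂ Equiv.swap hFt0 hi1
    rw [hswap] at h'
    exact h' 
  refine ⟨t0, hedge, ?_⟩
  intro z hz
  obtain ⟨a, b, hab, hzab⟩ := bsg_adj_form ((T t0).adj_sub hz)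
  have halt : (a : ℕ) + 1 < n := hab ▸ b.isLt
  obtain ⟨t, ht⟩ := hF'bij.2 ⟨(a : ℕ), by omega⟩
  have hFt : F t = a := Fin.ext (by
    have := congrArg Fin.val ht
    simpa [hF'def] using this)
  have hbt : (⟨(F t : ℕ) + 1, hFlt t⟩ : Fin n) = b := Fin.ext (by simp [hFt, hab])
  have hmem : s(u, z) ∈ (T t).edgeSet := by
    have h' := hFedge t
    have hswap := congrArg₂ Equiv.swap hFt hbt
    rw [hswap, ← hzab] at h'
    exact h' 
  have htt0 : t = t0 := hdisj hmem (Subgraph.mem_edgeSet.mpr hz)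
  have ha0 : a = i0 := by rw [← hFt, htt0, hFt0]
  have hb1 : b = i1 := Fin.ext (by rw [hab, ha0]; simp [h0, h1])
  rw [hzab, ha0, hb1]
/-- For every integer `n ≥ 3`, the generalized 4-connectivity of the bubble-sort graph `B_n`
is at most `n - 2`. -/
theorem generalizedConnectivity_four_bubbleSortGraph_le (n : ℕ) (hn : 3 ≤ n) :
    generalizedConnectivity (bubbleSortGraph n) 4 ≤ n - 2 := by
  classical
  set a0 : Fin n := ⟨0, by omega⟩ with ha0
  set a1 : Fin n := ⟨1, by omega⟩ with ha1
  set a2 : Fin n := ⟨2, by omega⟩ with ha2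
  have h01 : a0 ≠ a1 := by simp [ha0, ha1, Fin.ext_iff]
  have h02 : a0 ≠ a2 := by simp [ha0, ha2, Fin.ext_iff]
  have h12 : a1 ≠ a2 := by simp [ha1, ha2, Fin.ext_iff]
  set u : Equiv.Perm (Fin n) := 1 with hudef
  set v : Equiv.Perm (Fin n) := Equiv.swap a0 a1 with hvdef
  set w : Equiv.Perm (Fin n) := Equiv.swap a1 a2 with hwdef
  set x : Equiv.Perm (Fin n) := Equiv.swap a0 a2 with hxdef
  have huv : u ≠ v := fun h => h01 (by
    have := congrFun (congrArg (fun p => p.toFun) h) a0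
    simpa [hudef, hvdef, Equiv.swap_apply_left] using this)
  have huw : u ≠ w := fun h => h12 (by
    have := congrFun (congrArg (fun p => p.toFun) h) a1
    simpa [hudef, hwdef, Equiv.swap_apply_left] using this)
  have hux : u ≠ x := fun h => h02 (by
    have := congrFun (congrArg (fun p => p.toFun) h) a0
    simpa [hudef, hxdef, Equiv.swap_apply_left] using this)
  have hvw : v ≠ w := fun h => by
    have := congrFun (congrArg (fun p => p.toFun) h) a0
    simp [hvdef, hwdef, Equiv.swap_apply_left,
      Equiv.swap_apply_of_ne_of_ne h01 h02] at this
    exact h01 this.symm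
  have hvx : v ≠ x := fun h => by
    have := congrFun (congrArg (fun p => p.toFun) h) a0
    simp [hvdef, hxdef, Equiv.swap_apply_left] at this
    exact h12 this
  have hwx : w ≠ x := fun h => by
    have := congrFun (congrArg (fun p => p.toFun) h) a0
    simp [hwdef, hxdef, Equiv.swap_apply_left,
      Equiv.swap_apply_of_ne_of_ne h01 h02] at this
    exact h02 this
  set S : Finset (Equiv.Perm (Fin n)) := {u, v, w, x} with hSdef
  have hScard : S.card = 4 := by
    rw [hSdef]
    rw [Finset.card_insert_of_notMem (by simp [huv, huw, hux]),
      Finset.card_insert_of_notMem (by simp [hvw, hvx]),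
      Finset.card_insert_of_notMem (by simp [hwx]),
      Finset.card_singleton]
  have hmem : treeConnectivity (bubbleSortGraph n) ↑S ∈
      {m : ℕ | ∃ S' : Finset (Equiv.Perm (Fin n)), S'.card = 4 ∧
        m = treeConnectivity (bubbleSortGraph n) ↑S'} := ⟨S, hScard, rfl⟩
  refine le_trans (Nat.sInf_le hmem) ?_
  apply csSup_le'
  rintro ℓ ⟨T, hT⟩
  by_contra hcon
  have hℓ : n - 1 ≤ ℓ := by omega
  have huS : u ∈ (↑S : Set (Equiv.Perm (Fin n))) := by simp [hSdef]
  have hvS : v ∈ (↑S : Set (Equiv.Perm (Fin n))) := by simp [hSdef]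
  have hwS : w ∈ (↑S : Set (Equiv.Perm (Fin n))) := by simp [hSdef]
  have hdisj : ∀ {t t' : Fin ℓ} {e : Sym2 (Equiv.Perm (Fin n))},
      e ∈ (T t).edgeSet → e ∈ (T t').edgeSet → t = t' := by
    intro t t' e h1 h2
    by_contra hne
    have hmem2 : e ∈ (T t).edgeSet ∩ (T t').edgeSet := ⟨h1, h2⟩
    rw [(hT.2 hne).1] at hmem2
    exact hmem2
  obtain ⟨t0, hedge0, huniq0⟩ := key hn hT hℓ huS hwS huw a0 a1 rfl rfl
  obtain ⟨t1, hedge1, huniq1⟩ := key hn hT hℓ hvS hwS hvw a0 a1 rfl rfl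
  have husw : u * Equiv.swap a0 a1 = v := by rw [hudef, hvdef, one_mul]
  have hvsw : v * Equiv.swap a0 a1 = u := by
    rw [hvdef, hudef, Equiv.swap_mul_self]
  rw [husw] at hedge0 huniq0
  rw [hvsw] at hedge1 huniq1
  have ht01 : t0 = t1 := hdisj hedge0 (by rwa [Sym2.eq_swap])
  rw [← ht01] at huniq1
  -- walks from u stay in {u, v}
  have hclaim : ∀ (a b : (T t0).verts) (p : (T t0).coe.Walk a b),
      ((a : Equiv.Perm (Fin n)) = u ∨ (a : Equiv.Perm (Fin n)) = v) →
      ((b : Equiv.Perm (Fin n)) = u ∨ (b : Equiv.Perm (Fin n)) = v) := by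
    intro a b p
    induction p with
    | nil => exact id
    | cons h q ih =>
      rename_i aa cc bb
      intro ha
      apply ih
      have hadj : (T t0).Adj (aa : Equiv.Perm (Fin n)) (cc : Equiv.Perm (Fin n)) := h
      rcases ha with h1 | h1
      · rw [h1] at hadj
        exact Or.inr (huniq0 _ hadj)
      · rw [h1] at hadj
        exact Or.inl (huniq1 _ hadj)
  obtain ⟨htree, hsub⟩ := hT.1 t0
  have hu' : u ∈ (T t0).verts := hsub huS
  have hw' : w ∈ (T t0).verts := hsub hwS
  obtain ⟨p⟩ := htree.isConnected.preconnected ⟨u, hu'⟩ ⟨w, hw'⟩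
  rcases hclaim _ _ p (Or.inl rfl) with h | h
  · exact huw h.symm
  · exact hvw h.symm
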